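/- Let ‖·‖ be a norm on ℝ^d. For each integer m > 2, let E_m = {T ⊆ ℝ^d : |T| = m and T contains two points at ‖·‖-distance 1 apart}, and let G_m = (ℝ^d, E_m). Then χ(G_m) = χ((ℝ^d, ‖·‖), 1) for all such m. -/

import Mathlib

/-- A proper coloring of a hypergraph with edge set `E`: no edge is monochromatic. -/
def IsProperColoring {V : Type} {C : Type} (E : Set (Set V)) (φ : V → C) : Prop :=
  ∀ e ∈ E, ∃ x ∈ e, ∃ y ∈ e, φ x ≠ φ y

/-- The chromatic number of a hypergraph with vertex type `V` and edge set `E`. -/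
noncomputable def chromNum {V : Type} (E : Set (Set V)) : Cardinal :=
  sInf {c : Cardinal | ∃ (C : Type) (φ : V → C), Cardinal.mk C = c ∧ IsProperColoring E φ}

/-- The chromatic number of the unit distance graph on `ℝ^d` equipped with the
(semi)norm `N`, i.e. of the graph whose edges are the pairs `{x, y}` with `N (x - y) = 1`. -/
noncomputable def unitDistChromNum (d : ℕ) (N : Seminorm ℝ (Fin d → ℝ)) : Cardinal :=
  sInf {c : Cardinal | ∃ (C : Type) (φ : (Fin d → ℝ) → C),
    Cardinal.mk C = c ∧ ∀ x y : Fin d → ℝ, N (x - y) = 1 → φ x ≠ φ y}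

open Cardinal Set

section Aux

variable {d m : ℕ} {C : Type} {N : Seminorm ℝ (Fin d → ℝ)} {φ : (Fin d → ℝ) → C}

lemma sub_unit_ne {x : Fin d → ℝ} (h : N (x - x) = 1) : False := by
  rw [sub_self, map_zero] at h; exact zero_ne_one h

/-- A color class containing a unit-distance pair is finite. -/
lemma bad_fiber_finite (hm : 2 < m)
    (hφ : IsProperColoring
      {T : Set (Fin d → ℝ) | T.ncard = m ∧ ∃ x ∈ T, ∃ y ∈ T, N (x - y) = 1} φ)
    {u w : Fin d → ℝ} (hw : N (u - w) = 1) (hc : φ u = φ w) :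
    {x | φ x = φ u}.Finite := by
  by_contra hinf
  have hinf : {x | φ x = φ u}.Infinite := hinf
  have huw : u ≠ w := by rintro rfl; exact sub_unit_ne hw
  have hS' : ({x | φ x = φ u} \ {u, w}).Infinite :=
    hinf.diff ((Set.finite_singleton w).insert u)
  obtain ⟨T', hT'sub, hT'fin, hT'card⟩ := hS'.exists_subset_ncard_eq (m - 2)
  have huT' : u ∉ T' := fun h => (hT'sub h).2 (by simp)
  have hwT' : w ∉ T' := fun h => (hT'sub h).2 (by simp)
  set T : Set (Fin d → ℝ) := insert u (insert w T') with hT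
  have huwT : u ∉ insert w T' := by
    intro h; rcases h with h | h
    · exact huw h
    · exact huT' h
  have hcard : T.ncard = m := by
    rw [hT, Set.ncard_insert_of_notMem huwT (hT'fin.insert w),
        Set.ncard_insert_of_notMem hwT' hT'fin, hT'card]
    omega
  have hedge : T ∈ {T : Set (Fin d → ℝ) | T.ncard = m ∧ ∃ x ∈ T, ∃ y ∈ T, N (x - y) = 1} :=
    ⟨hcard, u, by simp [hT], w, by simp [hT], hw⟩
  obtain ⟨a, ha, b, hb, hab⟩ := hφ T hedge
  have hmono : ∀ z ∈ T, φ z = φ u := by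
    intro z hz
    rcases hz with rfl | hz
    · rfl
    rcases hz with rfl | hz
    · exact hc.symm
    · exact (hT'sub hz).1
  exact hab ((hmono a ha).trans (hmono b hb).symm)

/-- Each color class intersected with the set of "bad" points is finite. -/
lemma bad_inter_fiber_finite (hm : 2 < m)
    (hφ : IsProperColoring
      {T : Set (Fin d → ℝ) | T.ncard = m ∧ ∃ x ∈ T, ∃ y ∈ T, N (x - y) = 1} φ)
    (c : C) :
    ({x | φ x = c} ∩ {x | ∃ y, N (x - y) = 1 ∧ φ x = φ y}).Finite := by
  rcases Set.eq_empty_or_nonempty ({x | φ x = c} ∩ {x | ∃ y, N (x - y) = 1 ∧ φ x = φ y})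
    with he | ⟨u, hu⟩
  · simp [he]
  obtain ⟨w, hw1, hw2⟩ := hu.2
  refine (bad_fiber_finite hm hφ hw1 hw2).subset ?_
  intro z hz
  exact hz.1.trans hu.1.symm

end Aux

/-- Corollary 4.4.1: for any norm `‖·‖` on `ℝ^d` and any `m > 2`, the `m`-uniform
hypergraph `G_m` whose edges are all `m`-sets containing two points at `‖·‖`-distance 1
has chromatic number `χ((ℝ^d, ‖·‖), 1)`. -/
theorem chromNum_unit_mset_hypergraph (d : ℕ) (N : Seminorm ℝ (Fin d → ℝ))
    (hN : ∀ x : Fin d → ℝ, N x = 0 → x = 0) (m : ℕ) (hm : 2 < m) :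
    chromNum {T : Set (Fin d → ℝ) | T.ncard = m ∧ ∃ x ∈ T, ∃ y ∈ T, N (x - y) = 1} =
      unitDistChromNum d N := by
  classical
  set E : Set (Set (Fin d → ℝ)) :=
    {T : Set (Fin d → ℝ) | T.ncard = m ∧ ∃ x ∈ T, ∃ y ∈ T, N (x - y) = 1} with hE
  -- the injective coloring is proper for both structures
  have hid_unit : ∀ x y : Fin d → ℝ, N (x - y) = 1 → (id x : Fin d → ℝ) ≠ id y := by
    intro x y h hxy
    simp only [id] at hxy
    subst hxy
    exact sub_unit_ne h
  have hid_hyper : IsProperColoring E (id : (Fin d → ℝ) → Fin d → ℝ) := by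
    intro T hT
    have hTm : T.ncard = m := hT.1
    have hTfin : T.Finite := by
      by_contra hinf
      have hinf : T.Infinite := hinf
      have h0 := hinf.ncard
      omega
    have h1 : 1 < T.ncard := by omega
    obtain ⟨a, ha, b, hb, hab⟩ := (Set.one_lt_ncard hTfin).mp h1
    exact ⟨a, ha, b, hb, hab⟩
  have hSu_ne : {c : Cardinal | ∃ (C : Type) (φ : (Fin d → ℝ) → C),
      Cardinal.mk C = c ∧ ∀ x y : Fin d → ℝ, N (x - y) = 1 → φ x ≠ φ y}.Nonempty :=
    ⟨Cardinal.mk (Fin d → ℝ), ⟨Fin d → ℝ, id, rfl, hid_unit⟩⟩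
  have hSh_ne : {c : Cardinal | ∃ (C : Type) (φ : (Fin d → ℝ) → C),
      Cardinal.mk C = c ∧ IsProperColoring E φ}.Nonempty :=
    ⟨Cardinal.mk (Fin d → ℝ), ⟨Fin d → ℝ, id, rfl, hid_hyper⟩⟩
  apply le_antisymm
  · -- chromNum ≤ unitDistChromNum : unit-proper colorings are hypergraph-proper
    refine le_csInf hSu_ne ?_
    rintro c ⟨C, φ, hmk, hφ⟩
    refine csInf_le' ⟨C, φ, hmk, ?_⟩
    rintro T ⟨-, x, hx, y, hy, hxy⟩
    exact ⟨x, hx, y, hy, hφ x y hxy⟩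
  · -- unitDistChromNum ≤ chromNum
    refine le_csInf hSh_ne ?_
    rintro c ⟨C, φ, hmk, hφ⟩
    rw [← hmk]
    set U : Set (Fin d → ℝ) := {x | ∃ y, N (x - y) = 1 ∧ φ x = φ y} with hU
    have hAfin : ∀ c : C, ({x | φ x = c} ∩ U).Finite :=
      fun c => bad_inter_fiber_finite hm hφ c
    have hUsub : U ⊆ ⋃ c : C, ({x | φ x = c} ∩ U) := by
      intro x hx
      exact Set.mem_iUnion.2 ⟨φ x, rfl, hx⟩
    rcases finite_or_infinite C with hC | hC
    · -- finite case: compactness argument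
      haveI := hC
      have hUfin : U.Finite := (Set.finite_iUnion hAfin).subset hUsub
      have key : ∃ ψ : (Fin d → ℝ) → C, ∀ x y, N (x - y) = 1 → ψ x ≠ ψ y := by
        haveI : Nonempty C := ⟨φ 0⟩
        letI : TopologicalSpace C := ⊥
        haveI : DiscreteTopology C := ⟨rfl⟩
        set ι := {p : (Fin d → ℝ) × (Fin d → ℝ) // N (p.1 - p.2) = 1} with hι
        set Z : ι → Set ((Fin d → ℝ) → C) := fun p => {ψ | ψ p.1.1 ≠ ψ p.1.2} with hZ
        have hZc : ∀ p, IsClosed (Z p) := by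
          intro p
          have hrw : Z p = ((fun ψ : (Fin d → ℝ) → C => (ψ p.1.1, ψ p.1.2)) ⁻¹'
              {q : C × C | q.1 = q.2})ᶜ := rfl
          rw [hrw, isClosed_compl_iff]
          exact (isOpen_discrete _).preimage ((continuous_apply _).prodMk (continuous_apply _))
        have hne : (Set.univ ∩ ⋂ p, Z p).Nonempty := by
          rw [Set.nonempty_iff_ne_empty]
          intro hempty
          obtain ⟨t, ht⟩ := isCompact_univ.elim_finite_subfamily_closed Z hZc hempty
          set F : Set (Fin d → ℝ) :=
            (fun i : ι => i.1.1) '' ↑t ∪ (fun i : ι => i.1.2) '' ↑t with hF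
          have hFfin : F.Finite :=
            (t.finite_toSet.image _).union (t.finite_toSet.image _)
          obtain ⟨t0, ht0⟩ : ∃ t0 : Fin d → ℝ, ∀ x ∈ F, x + t0 ∉ U := by
            rcases Set.eq_empty_or_nonempty U with hUe | ⟨u0, hu0⟩
            · exact ⟨0, fun x _ h => by rw [hUe] at h; exact h⟩
            · obtain ⟨w0, hw01, -⟩ := hu0
              have hdne : Nonempty (Fin d) := by
                by_contra hd
                have h0 : u0 - w0 = 0 := funext fun i => absurd ⟨i⟩ hd
                rw [h0, map_zero] at hw01
                exact zero_ne_one hw01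
              haveI : Infinite (Fin d → ℝ) :=
                Infinite.of_injective (fun (r : ℝ) (_ : Fin d) => r)
                  (fun a b h => congrFun h (Classical.arbitrary _))
              have hB : (⋃ u ∈ U, ⋃ x ∈ F, ({u - x} : Set (Fin d → ℝ))).Finite :=
                hUfin.biUnion fun u _ => hFfin.biUnion fun x _ => Set.finite_singleton _
              obtain ⟨t0, ht0c⟩ := hB.infinite_compl.nonempty
              refine ⟨t0, fun x hx hmem => ht0c ?_⟩
              have heq : t0 = (x + t0) - x := by abel
              rw [heq]
              exact Set.mem_biUnion hmem (Set.mem_biUnion hx rfl)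
          have hmem : (fun v => φ (v + t0)) ∈ Set.univ ∩ ⋂ i ∈ t, Z i := by
            refine ⟨trivial, Set.mem_iInter₂.2 fun i hi => ?_⟩
            intro heq
            simp only at heq
            apply ht0 i.1.1 (Set.mem_union_left _ ⟨i, Finset.mem_coe.2 hi, rfl⟩)
            refine ⟨i.1.2 + t0, ?_, heq⟩
            have : i.1.1 + t0 - (i.1.2 + t0) = i.1.1 - i.1.2 := by abel
            rw [this]
            exact i.2
          rw [ht] at hmem
          exact hmem
        obtain ⟨ψ, -, hψ⟩ := hne
        refine ⟨ψ, fun x y h => ?_⟩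
        exact Set.mem_iInter.1 hψ ⟨(x, y), h⟩
      obtain ⟨ψ, hψ⟩ := key
      exact csInf_le' ⟨C, ψ, rfl, hψ⟩
    · -- infinite case: recolor the bad set with fresh colors
      haveI := hC
      set ψ : (Fin d → ℝ) → C ⊕ ↥U :=
        fun x => if h : x ∈ U then Sum.inr ⟨x, h⟩ else Sum.inl (φ x) with hψdef
      have hproper : ∀ x y, N (x - y) = 1 → ψ x ≠ ψ y := by
        intro x y h heq
        by_cases hx : x ∈ U <;> by_cases hy : y ∈ U
        · rw [hψdef] at heq
          simp only [dif_pos hx, dif_pos hy, Sum.inr.injEq, Subtype.mk.injEq] at heq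
          subst heq
          exact sub_unit_ne h
        · rw [hψdef] at heq
          simp only [dif_pos hx, dif_neg hy] at heq
          exact Sum.inr_ne_inl heq
        · rw [hψdef] at heq
          simp only [dif_neg hx, dif_pos hy] at heq
          exact Sum.inl_ne_inr heq
        · rw [hψdef] at heq
          simp only [dif_neg hx, dif_neg hy, Sum.inl.injEq] at heq
          exact hx ⟨y, h, heq⟩
      have hUle : Cardinal.mk ↥U ≤ Cardinal.mk C := by
        calc Cardinal.mk ↥U
            ≤ Cardinal.mk ↥(⋃ c : C, ({x | φ x = c} ∩ U)) := Cardinal.mk_le_mk_of_subset hUsub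
          _ ≤ Cardinal.mk C * ⨆ c : C, Cardinal.mk ↥({x | φ x = c} ∩ U) :=
              Cardinal.mk_iUnion_le _
          _ ≤ Cardinal.mk C * Cardinal.aleph0 := by
              refine mul_le_mul_right (ciSup_le' fun c => ?_) _
              exact Cardinal.le_aleph0_iff_set_countable.2 (hAfin c).countable
          _ = Cardinal.mk C :=
              Cardinal.mul_eq_left (Cardinal.aleph0_le_mk C) (Cardinal.aleph0_le_mk C)
                Cardinal.aleph0_ne_zero
      have hle : Cardinal.mk (C ⊕ ↥U) ≤ Cardinal.mk C := by
        rw [Cardinal.mk_sum, Cardinal.lift_id, Cardinal.lift_id]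
        exact le_of_eq (Cardinal.add_eq_left (Cardinal.aleph0_le_mk C) hUle)
      exact le_trans (csInf_le' ⟨C ⊕ ↥U, ψ, rfl, hproper⟩) hle
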